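/- Let q < 0 and let x : [0, ∞) → ℝ be a solution of ẋ = q + x² with initial value x(0) ∈ (−∞, √(−q)). Then x(t) → −√(−q) as t → ∞. -/

import Mathlib

open Real Set Filter

private lemma stmt5_zero {a : ℝ} {x : ℝ → ℝ}
    (hx : ∀ t : ℝ, 0 ≤ t → HasDerivAt x (x t ^ 2 - a ^ 2) t)
    {c : ℝ} (hc : c ^ 2 = a ^ 2) {s t : ℝ} (hs : 0 ≤ s) (hst : s ≤ t)
    (hxt : x t = c) : x s = c := by
  have cont : ContinuousOn x (Icc s t) := fun u hu =>
    ((hx u (hs.trans hu.1)).continuousAt).continuousWithinAt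
  obtain ⟨K, hK⟩ := (isCompact_Icc (a := s) (b := t)).exists_bound_of_continuousOn
    ((cont.add continuousOn_const) : ContinuousOn (fun u => x u + c) (Icc s t))
  set g : ℝ → ℝ := fun u => x (t + s - u) - c with hg
  have hmap : ∀ u ∈ Icc s t, t + s - u ∈ Icc s t := fun u hu =>
    ⟨by linarith [hu.2], by linarith [hu.1]⟩
  have gcont : ContinuousOn g (Icc s t) := by
    apply ContinuousOn.sub _ continuousOn_const
    exact cont.comp (Continuous.continuousOn (by continuity)) hmap
  have gderiv : ∀ u ∈ Ico s t,
      HasDerivWithinAt g (-(g u * (x (t + s - u) + c))) (Ici u) u := by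
    intro u hu
    have h1 : HasDerivAt (fun u : ℝ => t + s - u) (-1) u := by
      simpa using ((hasDerivAt_id u).const_sub (t + s))
    have h2 := ((hx (t + s - u)
      (hs.trans (hmap u (Ico_subset_Icc_self hu)).1)).comp u h1).sub_const c
    have h3 : HasDerivAt g (-(g u * (x (t + s - u) + c))) u := by
      refine h2.congr_deriv ?_
      simp only [hg]
      linear_combination -hc
    exact h3.hasDerivWithinAt
  have bound : ∀ u ∈ Ico s t, ‖-(g u * (x (t + s - u) + c))‖ ≤ K * ‖g u‖ + 0 := by
    intro u hu
    have hb : ‖x (t + s - u) + c‖ ≤ K := hK _ (hmap u (Ico_subset_Icc_self hu))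
    rw [norm_neg, norm_mul, add_zero]
    nlinarith [norm_nonneg (g u)]
  have ga : ‖g s‖ ≤ 0 := by simp [hg, hxt]
  have := norm_le_gronwallBound_of_norm_deriv_right_le gcont gderiv ga bound t
    ⟨hst, le_refl t⟩
  rw [gronwallBound_ε0_δ0] at this
  have : g t = 0 := by simpa using le_antisymm this (norm_nonneg _)
  simpa [hg, sub_eq_zero] using this

private lemma stmt5_fw {a : ℝ} {x : ℝ → ℝ}
    (hx : ∀ t : ℝ, 0 ≤ t → HasDerivAt x (x t ^ 2 - a ^ 2) t)
    {c : ℝ} (hc : c ^ 2 = a ^ 2) {s t : ℝ} (hs : 0 ≤ s) (hst : s ≤ t)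
    (hxs : x s = c) : x t = c := by
  have cont : ContinuousOn x (Icc s t) := fun u hu =>
    ((hx u (hs.trans hu.1)).continuousAt).continuousWithinAt
  obtain ⟨K, hK⟩ := (isCompact_Icc (a := s) (b := t)).exists_bound_of_continuousOn
    ((cont.add continuousOn_const) : ContinuousOn (fun u => x u + c) (Icc s t))
  set g : ℝ → ℝ := fun u => x u - c with hg
  have gcont : ContinuousOn g (Icc s t) := cont.sub continuousOn_const
  have gderiv : ∀ u ∈ Ico s t,
      HasDerivWithinAt g (g u * (x u + c)) (Ici u) u := by
    intro u hu
    have h2 := (hx u (hs.trans hu.1)).sub_const c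
    have h3 : HasDerivAt g (g u * (x u + c)) u := by
      refine h2.congr_deriv ?_
      simp only [hg]
      linear_combination hc
    exact h3.hasDerivWithinAt
  have bound : ∀ u ∈ Ico s t, ‖g u * (x u + c)‖ ≤ K * ‖g u‖ + 0 := by
    intro u hu
    have hb : ‖x u + c‖ ≤ K := hK _ (Ico_subset_Icc_self hu)
    rw [norm_mul, add_zero]
    nlinarith [norm_nonneg (g u)]
  have ga : ‖g s‖ ≤ 0 := by simp [hg, hxs]
  have := norm_le_gronwallBound_of_norm_deriv_right_le gcont gderiv ga bound t
    ⟨hst, le_refl t⟩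
  rw [gronwallBound_ε0_δ0] at this
  have : g t = 0 := by simpa using le_antisymm this (norm_nonneg _)
  simpa [hg, sub_eq_zero] using this

private lemma stmt5_mono {f f' : ℝ → ℝ}
    (h : ∀ t : ℝ, 0 ≤ t → HasDerivAt f (f' t) t) (hpos : ∀ t : ℝ, 0 ≤ t → 0 ≤ f' t) :
    MonotoneOn f (Ici 0) := by
  apply monotoneOn_of_deriv_nonneg (convex_Ici 0)
  · exact fun u hu => ((h u hu).continuousAt).continuousWithinAt
  · intro u hu
    rw [interior_Ici] at hu
    exact ((h u hu.le).differentiableAt).differentiableWithinAt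
  · intro u hu
    rw [interior_Ici] at hu
    rw [(h u hu.le).deriv]
    exact hpos u hu.le

theorem stmt_5 (q : ℝ) (hq : q < 0) (x : ℝ → ℝ)
    (hx : ∀ t : ℝ, 0 ≤ t → HasDerivAt x (q + (x t) ^ 2) t)
    (hinit : x 0 < Real.sqrt (-q)) :
    Filter.Tendsto x Filter.atTop (nhds (-Real.sqrt (-q))) := by
  set a := Real.sqrt (-q) with ha
  have ha0 : 0 < a := Real.sqrt_pos.mpr (by linarith)
  have ha2 : a ^ 2 = -q := Real.sq_sqrt (by linarith)
  have hx' : ∀ t : ℝ, 0 ≤ t → HasDerivAt x (x t ^ 2 - a ^ 2) t := by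
    intro t ht
    have := hx t ht
    convert this using 1
    rw [ha2]; ring
  clear hx
  have contIci : ∀ t : ℝ, ContinuousOn x (Icc 0 t) := fun t u hu =>
    ((hx' u hu.1).continuousAt).continuousWithinAt
  have inv_lt : ∀ c : ℝ, c ^ 2 = a ^ 2 → x 0 < c → ∀ t, 0 ≤ t → x t < c := by
    intro c hc h0 t ht
    by_contra h
    push_neg at h
    obtain ⟨u, hu, hxu⟩ := intermediate_value_Icc ht (contIci t) ⟨h0.le, h⟩
    exact absurd (stmt5_zero hx' hc le_rfl hu.1 hxu) (ne_of_lt h0)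
  have inv_gt : ∀ c : ℝ, c ^ 2 = a ^ 2 → c < x 0 → ∀ t, 0 ≤ t → c < x t := by
    intro c hc h0 t ht
    by_contra h
    push_neg at h
    obtain ⟨u, hu, hxu⟩ := intermediate_value_Icc' ht (contIci t) ⟨h, h0.le⟩
    exact absurd (stmt5_zero hx' hc le_rfl hu.1 hxu) (ne_of_gt h0)
  rcases lt_trichotomy (x 0) (-a) with h0 | h0 | h0
  · -- x 0 < -a : x increasing to -a
    have hlt : ∀ t, 0 ≤ t → x t < -a := inv_lt (-a) (by ring) h0
    have mono : MonotoneOn x (Ici 0) := by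
      apply stmt5_mono hx'
      intro t ht
      have h1 := hlt t ht
      nlinarith
    set z : ℝ → ℝ := fun t => x (max t 0) with hz
    have zmono : Monotone z := fun s t hst =>
      mono (le_max_right s 0) (le_max_right t 0) (max_le_max hst le_rfl)
    have zbdd : BddAbove (range z) :=
      ⟨-a, by rintro _ ⟨t, rfl⟩; exact (hlt _ (le_max_right t 0)).le⟩
    have hten := tendsto_atTop_ciSup zmono zbdd
    set L := ⨆ t, z t with hL
    have hLle : L ≤ -a := ciSup_le fun t => (hlt _ (le_max_right t 0)).le
    have hLge : ∀ t, 0 ≤ t → x t ≤ L := by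
      intro t ht
      have := le_ciSup zbdd t
      simpa [hz, max_eq_left ht] using this
    have hLa : L = -a := by
      by_contra hne
      have hLlt : L < -a := lt_of_le_of_ne hLle hne
      set c := L ^ 2 - a ^ 2 with hcdef
      have hc : 0 < c := by nlinarith
      have mono2 : MonotoneOn (fun u => x u - c * u) (Ici 0) := by
        apply stmt5_mono (f' := fun u => x u ^ 2 - a ^ 2 - c)
        · intro t ht
          have hcu : HasDerivAt (fun u : ℝ => c * u) c t := by
            simpa using (hasDerivAt_id t).const_mul c
          exact (hx' t ht).sub hcu
        · intro t ht
          have h1 : x t ≤ L := hLge t ht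
          have h2 : x t ≤ -a := (hlt t ht).le
          nlinarith
      set T : ℝ := max 0 ((L - x 0) / c + 1) with hT
      have hT0 : 0 ≤ T := le_max_left _ _
      have hTb : (L - x 0) / c + 1 ≤ T := le_max_right _ _
      have := mono2 (self_mem_Ici) (mem_Ici.mpr hT0) hT0
      simp only [mul_zero, sub_zero] at this
      have hcT : L - x 0 < c * T := by
        have : (L - x 0) / c < T := by linarith
        calc L - x 0 = c * ((L - x 0) / c) := by field_simp
        _ < c * T := by exact (mul_lt_mul_iff_right₀ hc).mpr this
      have := hLge T hT0
      linarith
    have hten' : Tendsto z atTop (nhds (-a)) := hLa ▸ hten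
    apply hten'.congr'
    filter_upwards [eventually_ge_atTop (0 : ℝ)] with t ht
    simp [hz, max_eq_left ht]
  · -- x 0 = -a : constant
    have hconst : ∀ t, 0 ≤ t → x t = -a := fun t ht =>
      stmt5_fw hx' (by ring) le_rfl ht h0
    apply Tendsto.congr' _ (tendsto_const_nhds (x := -a) (f := atTop))
    filter_upwards [eventually_ge_atTop (0 : ℝ)] with t ht
    exact (hconst t ht).symm
  · -- -a < x 0 < a : x decreasing to -a
    have hgt : ∀ t, 0 ≤ t → -a < x t := inv_gt (-a) (by ring) h0
    have hlt : ∀ t, 0 ≤ t → x t < a := inv_lt a (by ring) hinit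
    have mono : MonotoneOn (fun u => -x u) (Ici 0) := by
      apply stmt5_mono (f' := fun u => -(x u ^ 2 - a ^ 2))
      · exact fun t ht => (hx' t ht).neg
      · intro t ht
        have h1 := hgt t ht
        have h2 := hlt t ht
        nlinarith
    have anti : AntitoneOn x (Ici 0) := by
      intro s hs t ht hst
      have h2 : -x s ≤ -x t := mono hs ht hst
      linarith
    set z : ℝ → ℝ := fun t => x (max t 0) with hz
    have zanti : Antitone z := fun s t hst =>
      anti (le_max_right s 0) (le_max_right t 0) (max_le_max hst le_rfl)
    have zbdd : BddBelow (range z) :=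
      ⟨-a, by rintro _ ⟨t, rfl⟩; exact (hgt _ (le_max_right t 0)).le⟩
    have hten := tendsto_atTop_ciInf zanti zbdd
    set L := ⨅ t, z t with hL
    have hLge : -a ≤ L := le_ciInf fun t => (hgt _ (le_max_right t 0)).le
    have hLle : ∀ t, 0 ≤ t → L ≤ x t := by
      intro t ht
      have := ciInf_le zbdd t
      simpa [hz, max_eq_left ht] using this
    have hx0 : ∀ t, 0 ≤ t → x t ≤ x 0 := fun t ht =>
      anti self_mem_Ici (mem_Ici.mpr ht) ht
    have hLa : L = -a := by
      by_contra hne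
      have hLgt : -a < L := lt_of_le_of_ne hLge (Ne.symm hne)
      set m := max (L ^ 2) (x 0 ^ 2) with hm
      set c := a ^ 2 - m with hcdef
      have hLx0 : L ≤ x 0 := hLle 0 le_rfl
      have hc : 0 < c := by
        have h1 : L ^ 2 < a ^ 2 := by nlinarith
        have h2 : x 0 ^ 2 < a ^ 2 := by nlinarith
        have := max_lt h1 h2
        simp only [hcdef, hm]
        linarith
      have key : ∀ u, 0 ≤ u → x u ^ 2 - a ^ 2 + c ≤ 0 := by
        intro u hu
        have h1 : L ≤ x u := hLle u hu
        have h2 : x u ≤ x 0 := hx0 u hu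
        have h3 : x u ^ 2 ≤ m := by
          rcases le_total (x u) 0 with h | h
          · exact le_max_of_le_left (by nlinarith)
          · exact le_max_of_le_right (by nlinarith)
        simp only [hcdef]
        linarith
      have mono2 : MonotoneOn (fun u => -x u - c * u) (Ici 0) := by
        apply stmt5_mono (f' := fun u => -(x u ^ 2 - a ^ 2) - c)
        · intro t ht
          have hcu : HasDerivAt (fun u : ℝ => c * u) c t := by
            simpa using (hasDerivAt_id t).const_mul c
          exact ((hx' t ht).neg).sub hcu
        · intro t ht
          have := key t ht
          linarith
      set T : ℝ := max 0 ((x 0 - L) / c + 1) with hT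
      have hT0 : 0 ≤ T := le_max_left _ _
      have hTb : (x 0 - L) / c + 1 ≤ T := le_max_right _ _
      have := mono2 (self_mem_Ici) (mem_Ici.mpr hT0) hT0
      simp only [mul_zero, sub_zero] at this
      have hcT : x 0 - L < c * T := by
        have : (x 0 - L) / c < T := by linarith
        calc x 0 - L = c * ((x 0 - L) / c) := by field_simp
        _ < c * T := by exact (mul_lt_mul_iff_right₀ hc).mpr this
      have := hLle T hT0
      linarith
    have hten' : Tendsto z atTop (nhds (-a)) := hLa ▸ hten
    apply hten'.congr'
    filter_upwards [eventually_ge_atTop (0 : ℝ)] with t ht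
    simp [hz, max_eq_left ht]
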